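/- Let X be a rack containing elements x_0,...,x_{k-1} satisfying the cyclic Fibonacci relation x_{i+2} = x_i * x_{i+1} with indices modulo k. Then the map h_s: C_n^R(X) → C_{n+2}^R(X), sending a generator w to Σ_{i=0}^{k-1} (w, x_i, x_{i+1}), is a chain map. -/

import Mathlib

/-- Delete the `i`-th coordinate of a tuple. -/
def delF {X : Type*} {n : ℕ} (i : Fin (n + 1)) (x : Fin (n + 1) → X) : Fin n → X :=
  fun j => x (i.succAbove j)

/-- Delete the `i`-th coordinate, acting by `* x_i` on the earlier coordinates. -/
def delS {X : Type*} (op : X → X → X) {n : ℕ} (i : Fin (n + 1)) (x : Fin (n + 1) → X) :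
    Fin n → X :=
  fun j => if (j : ℕ) < (i : ℕ) then op (x (Fin.castSucc j)) (x i) else x (i.succAbove j)

/-- The rack boundary of a generator (tuples indexed from 0; the paper's index `i ∈ {2,…,n}`
corresponds to `i ∈ {1,…,n}` here, with sign `(-1)^(i+1)`). -/
noncomputable def bdryGen {X : Type*} (op : X → X → X) {n : ℕ} (x : Fin (n + 1) → X) :
    (Fin n → X) →₀ ℤ :=
  ∑ i : Fin (n + 1), if (i : ℕ) = 0 then 0 else
    ((-1 : ℤ) ^ ((i : ℕ) + 1)) •
      (Finsupp.single (delF i x) 1 - Finsupp.single (delS op i x) 1)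

/-- The rack boundary map `∂ : C^R_{n+1}(X) → C^R_n(X)`. -/
noncomputable def bdry {X : Type*} (op : X → X → X) (n : ℕ) :
    ((Fin (n + 1) → X) →₀ ℤ) →ₗ[ℤ] ((Fin n → X) →₀ ℤ) :=
  Finsupp.lsum ℤ fun x => LinearMap.toSpanSingleton ℤ _ (bdryGen op x)

/-- The chain map `*_a`, applying `* a` to every coordinate. -/
noncomputable def starMap {X : Type*} (op : X → X → X) (a : X) (m : ℕ) :
    ((Fin m → X) →₀ ℤ) →ₗ[ℤ] ((Fin m → X) →₀ ℤ) :=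
  Finsupp.lsum ℤ fun x =>
    LinearMap.toSpanSingleton ℤ _ (Finsupp.single (fun j => op (x j) a) 1)

/-- The map `h_a`, appending `a` as the last coordinate. -/
noncomputable def hmap {X : Type*} (a : X) (m : ℕ) :
    ((Fin m → X) →₀ ℤ) →ₗ[ℤ] ((Fin (m + 1) → X) →₀ ℤ) :=
  Finsupp.lsum ℤ fun x => LinearMap.toSpanSingleton ℤ _ (Finsupp.single (Fin.snoc x a) 1)


lemma succAbove_cc {n : ℕ} (j : Fin (n+1)) (r : Fin n) :
    (j.castSucc.castSucc).succAbove (r.castSucc.castSucc) =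
      ((j.succAbove r).castSucc).castSucc := by
  rcases lt_or_ge (r.castSucc) j with h | h
  · rw [Fin.succAbove_of_castSucc_lt _ _ (by simp only [Fin.lt_def, Fin.coe_castSucc] at h ⊢; omega),
      Fin.succAbove_of_castSucc_lt _ _ h]
  · rw [Fin.succAbove_of_le_castSucc _ _ (by simp only [Fin.le_def, Fin.coe_castSucc] at h ⊢; omega),
      Fin.succAbove_of_le_castSucc _ _ h, Fin.succ_castSucc, Fin.succ_castSucc]

lemma succAbove_cc_high1 {n : ℕ} (j : Fin (n+1)) :
    (j.castSucc.castSucc).succAbove (Fin.last (n+1)) = Fin.last (n+2) := by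
  rw [Fin.succAbove_of_le_castSucc _ _ (by simp [Fin.le_def] <;> omega)]
  exact Fin.succ_last (n+1)

lemma succAbove_cc_high2 {n : ℕ} (j : Fin (n+1)) :
    (j.castSucc.castSucc).succAbove ((Fin.last n).castSucc) = (Fin.last (n+1)).castSucc := by
  rw [Fin.succAbove_of_le_castSucc _ _ (by simp [Fin.le_def] <;> omega), Fin.succ_castSucc, Fin.succ_last]

lemma delF_cc {X : Type*} {n : ℕ} (j : Fin (n+1)) (w : Fin (n+1) → X) (a b : X) :
    delF (j.castSucc.castSucc) (Fin.snoc (Fin.snoc w a) b) =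
      Fin.snoc (Fin.snoc (delF j w) a) b := by
  funext t
  refine Fin.lastCases ?_ (fun s => ?_) t
  · rw [Fin.snoc_last, delF, succAbove_cc_high1, Fin.snoc_last]
  · rw [Fin.snoc_castSucc, delF]
    refine Fin.lastCases ?_ (fun r => ?_) s
    · rw [succAbove_cc_high2, Fin.snoc_castSucc, Fin.snoc_last, Fin.snoc_last]
    · rw [succAbove_cc, Fin.snoc_castSucc, Fin.snoc_castSucc, Fin.snoc_castSucc]
      rfl

lemma delS_cc {X : Type*} (op : X → X → X) {n : ℕ} (j : Fin (n+1)) (w : Fin (n+1) → X) (a b : X) :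
    delS op (j.castSucc.castSucc) (Fin.snoc (Fin.snoc w a) b) =
      Fin.snoc (Fin.snoc (delS op j w) a) b := by
  funext t
  refine Fin.lastCases ?_ (fun s => ?_) t
  · rw [Fin.snoc_last, delS, if_neg (by simp <;> omega), succAbove_cc_high1, Fin.snoc_last]
  · rw [Fin.snoc_castSucc, delS]
    refine Fin.lastCases ?_ (fun r => ?_) s
    · rw [if_neg (by simp <;> omega), succAbove_cc_high2, Fin.snoc_castSucc, Fin.snoc_last,
        Fin.snoc_last]
    · simp only [Fin.coe_castSucc, Fin.snoc_castSucc, delS]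
      rcases lt_or_ge ((r : ℕ)) ((j : ℕ)) with h | h
      · rw [if_pos (by simpa using h), if_pos (by simpa using h)]
      · rw [if_neg (by simpa using not_lt.2 h), if_neg (by simpa using not_lt.2 h),
          succAbove_cc, Fin.snoc_castSucc, Fin.snoc_castSucc]

lemma delF_mid {X : Type*} {n : ℕ} (w : Fin (n+1) → X) (a b : X) :
    delF ((Fin.last (n+1)).castSucc) (Fin.snoc (Fin.snoc w a) b) = Fin.snoc w b := by
  funext t
  refine Fin.lastCases ?_ (fun s => ?_) t
  · rw [Fin.snoc_last, delF, Fin.succAbove_of_le_castSucc _ _ (by simp [Fin.le_def]),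
      Fin.succ_last, Fin.snoc_last]
  · rw [Fin.snoc_castSucc, delF, Fin.succAbove_of_castSucc_lt _ _ (by simp [Fin.lt_def] <;> omega),
      Fin.snoc_castSucc, Fin.snoc_castSucc]

lemma delS_mid {X : Type*} (op : X → X → X) {n : ℕ} (w : Fin (n+1) → X) (a b : X) :
    delS op ((Fin.last (n+1)).castSucc) (Fin.snoc (Fin.snoc w a) b) =
      Fin.snoc (fun t => op (w t) a) b := by
  funext t
  refine Fin.lastCases ?_ (fun s => ?_) t
  · rw [Fin.snoc_last, delS, if_neg (by simp), Fin.succAbove_of_le_castSucc _ _ (by simp [Fin.le_def]),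
      Fin.succ_last, Fin.snoc_last]
  · rw [Fin.snoc_castSucc, delS, if_pos (by simp [Fin.lt_def] <;> omega)]
    rw [Fin.snoc_castSucc, Fin.snoc_castSucc, Fin.snoc_castSucc, Fin.snoc_last]

lemma delF_last {X : Type*} {n : ℕ} (w : Fin (n+1) → X) (a b : X) :
    delF (Fin.last (n+2)) (Fin.snoc (Fin.snoc w a) b) = Fin.snoc w a := by
  funext t
  rw [delF, Fin.succAbove_last, Fin.snoc_castSucc]

lemma delS_last {X : Type*} (op : X → X → X) {n : ℕ} (w : Fin (n+1) → X) (a b : X) :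
    delS op (Fin.last (n+2)) (Fin.snoc (Fin.snoc w a) b) =
      Fin.snoc (fun t => op (w t) b) (op a b) := by
  funext t
  rw [delS, if_pos (by simpa [Fin.lt_def] using t.isLt), Fin.snoc_castSucc, Fin.snoc_last]
  refine Fin.lastCases ?_ (fun s => ?_) t
  · rw [Fin.snoc_last, Fin.snoc_last]
  · rw [Fin.snoc_castSucc, Fin.snoc_castSucc]

set_option maxHeartbeats 1000000 in
lemma bdryGen_snoc_snoc {X : Type*} (op : X → X → X) {n : ℕ} (w : Fin (n+1) → X) (a b : X) :
    bdryGen op (Fin.snoc (Fin.snoc w a) b) =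
      (∑ t : Fin (n+1), if (t:ℕ) = 0 then 0 else ((-1:ℤ)^((t:ℕ)+1)) •
        (Finsupp.single ((Fin.snoc (Fin.snoc (delF t w) a) b : Fin (n+2) → X)) (1:ℤ)
          - Finsupp.single ((Fin.snoc (Fin.snoc (delS op t w) a) b : Fin (n+2) → X)) 1))
      + ((-1:ℤ)^(n+1+1)) • (Finsupp.single ((Fin.snoc w b : Fin (n+2) → X)) (1:ℤ)
          - Finsupp.single ((Fin.snoc (fun t => op (w t) a) b : Fin (n+2) → X)) 1)
      + ((-1:ℤ)^(n+2+1)) • (Finsupp.single ((Fin.snoc w a : Fin (n+2) → X)) (1:ℤ)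
          - Finsupp.single ((Fin.snoc (fun t => op (w t) b) (op a b) : Fin (n+2) → X)) 1) := by
  unfold bdryGen
  rw [Fin.sum_univ_castSucc, Fin.sum_univ_castSucc]
  refine congrArg₂ (· + ·) (congrArg₂ (· + ·) ?_ ?_) ?_
  · refine Finset.sum_congr rfl fun t _ => ?_
    rw [Fin.coe_castSucc, Fin.coe_castSucc, delF_cc, delS_cc]
  · rw [Fin.coe_castSucc, Fin.val_last, if_neg (by omega), delF_mid, delS_mid]
  · rw [Fin.val_last, if_neg (by omega), delF_last, delS_last]

lemma cyclic_cancel {X : Type*} (op : X → X → X) {k : ℕ} [NeZero k] (x : ZMod k → X)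
    (hfib : ∀ i : ZMod k, x (i + 2) = op (x i) (x (i + 1))) {m : ℕ} (w : Fin m → X) (c : ℤ) :
    ∑ i : ZMod k,
      (c • (Finsupp.single ((Fin.snoc w (x (i+1)) : Fin (m+1) → X)) (1:ℤ)
          - Finsupp.single ((Fin.snoc (fun t => op (w t) (x i)) (x (i+1)) : Fin (m+1) → X)) 1)
       + (-c) • (Finsupp.single ((Fin.snoc w (x i) : Fin (m+1) → X)) (1:ℤ)
          - Finsupp.single ((Fin.snoc (fun t => op (w t) (x (i+1))) (op (x i) (x (i+1))) : Fin (m+1) → X)) 1)) = 0 := by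
  have shift : ∀ (F : ZMod k → ((Fin (m+1) → X) →₀ ℤ)), ∑ i : ZMod k, F (i+1) = ∑ i : ZMod k, F i :=
    fun F => Fintype.sum_equiv (Equiv.addRight (1 : ZMod k)) _ F (fun i => rfl)
  have h4 : ∀ i : ZMod k,
      (c • (Finsupp.single ((Fin.snoc w (x (i+1)) : Fin (m+1) → X)) (1:ℤ)
          - Finsupp.single ((Fin.snoc (fun t => op (w t) (x i)) (x (i+1)) : Fin (m+1) → X)) 1)
       + (-c) • (Finsupp.single ((Fin.snoc w (x i) : Fin (m+1) → X)) (1:ℤ)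
          - Finsupp.single ((Fin.snoc (fun t => op (w t) (x (i+1))) (op (x i) (x (i+1))) : Fin (m+1) → X)) 1))
      = (c • Finsupp.single ((Fin.snoc w (x (i+1)) : Fin (m+1) → X)) (1:ℤ)
          - c • Finsupp.single ((Fin.snoc w (x i) : Fin (m+1) → X)) (1:ℤ))
        + (c • Finsupp.single ((Fin.snoc (fun t => op (w t) (x (i+1))) (x (i+1+1)) : Fin (m+1) → X)) (1:ℤ)
          - c • Finsupp.single ((Fin.snoc (fun t => op (w t) (x i)) (x (i+1)) : Fin (m+1) → X)) (1:ℤ)) := by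
    intro i
    rw [show x (i+1+1) = op (x i) (x (i+1)) from by rw [show i+1+1 = i+2 from by ring, hfib]]
    simp only [smul_sub, neg_smul, neg_sub]
    abel
  rw [Finset.sum_congr rfl fun i _ => h4 i, Finset.sum_add_distrib,
    Finset.sum_sub_distrib, Finset.sum_sub_distrib,
    shift (fun i => c • Finsupp.single ((Fin.snoc w (x i) : Fin (m+1) → X)) (1:ℤ)),
    shift (fun i => c • Finsupp.single ((Fin.snoc (fun t => op (w t) (x i)) (x (i+1)) : Fin (m+1) → X)) (1:ℤ)),
    sub_self, sub_self, add_zero]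

set_option maxHeartbeats 1000000 in
/-- The homomorphism `h_s : C^R_n(X) → C^R_{n+2}(X)`, appending `(x_i, x_{i+1})`
summed over a cyclic Fibonacci family `x_0, …, x_{k-1}` (indices mod `k`,
`x_{i+2} = x_i * x_{i+1}`), is a chain map. -/
theorem hs_chain_map {X : Type*} (op : X → X → X)
    (hbij : ∀ b : X, Function.Bijective fun a => op a b)
    (hdist : ∀ a b c : X, op (op a b) c = op (op a c) (op b c))
    (k : ℕ) [NeZero k] (x : ZMod k → X)
    (hfib : ∀ i : ZMod k, x (i + 2) = op (x i) (x (i + 1)))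
    (hs : ∀ m : ℕ, ((Fin m → X) →₀ ℤ) →ₗ[ℤ] ((Fin (m + 2) → X) →₀ ℤ))
    (hsdef : ∀ m : ℕ, hs m = Finsupp.lsum ℤ fun w =>
      LinearMap.toSpanSingleton ℤ _
        (∑ i : ZMod k, Finsupp.single ((Fin.snoc (Fin.snoc w (x i)) (x (i + 1))) : Fin (m + 2) → X) (1 : ℤ)))
    (n : ℕ) :
    (bdry op (n + 2)) ∘ₗ (hs (n + 1)) = (hs n) ∘ₗ (bdry op n) := by
  rw [hsdef, hsdef]
  apply Finsupp.lhom_ext'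
  intro w
  apply LinearMap.ext_ring
  simp only [LinearMap.coe_comp, Function.comp_apply, Finsupp.lsingle_apply, bdry,
    Finsupp.lsum_single, LinearMap.toSpanSingleton_apply_one, map_sum]
  simp only [bdryGen_snoc_snoc]
  unfold bdryGen
  rw [map_sum, Finset.sum_add_distrib, Finset.sum_add_distrib, Finset.sum_comm]
  simp only [show ((-1:ℤ)^(n+2+1)) = -((-1:ℤ)^(n+1+1)) from by rw [pow_succ]; ring]
  rw [add_assoc, ← Finset.sum_add_distrib]
  rw [show (∑ i : ZMod k,
      (((-1:ℤ)^(n+1+1)) • (Finsupp.single ((Fin.snoc w (x (i+1)) : Fin (n+2) → X)) (1:ℤ)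
          - Finsupp.single ((Fin.snoc (fun t => op (w t) (x i)) (x (i+1)) : Fin (n+2) → X)) 1)
       + (-((-1:ℤ)^(n+1+1))) • (Finsupp.single ((Fin.snoc w (x i) : Fin (n+2) → X)) (1:ℤ)
          - Finsupp.single ((Fin.snoc (fun t => op (w t) (x (i+1))) (op (x i) (x (i+1))) : Fin (n+2) → X)) 1))) = 0
    from cyclic_cancel op x hfib w ((-1:ℤ)^(n+1+1)), add_zero]
  refine Finset.sum_congr rfl fun t _ => ?_
  by_cases h : (t : ℕ) = 0
  · simp [h]
  · simp [h, smul_sub, Finset.sum_sub_distrib, Finset.smul_sum, map_sub,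
      Finsupp.lsum_single, LinearMap.toSpanSingleton_apply, Finsupp.smul_single,
      smul_eq_mul, mul_one]
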